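/- Threshold inequalities for the cdf bounds. Assume overlap and 0 < c̲ < p₁ < c̄ < 1. Then, writing F(y−) for the left limit of a monotone function F at y: max{F̄₁(Q̄₁−), F̲₀(Q̲₀−)} ≤ (c̄ − p₁)/(c̄ − c̲) ≤ min{F̄₁(Q̄₁), F̲₀(Q̲₀)}, and max{F̄₀(Q̄₀−), F̲₁(Q̲₁−)} ≤ (p₁ − c̲)/(c̄ − c̲) ≤ min{F̄₀(Q̄₀), F̲₁(Q̲₁)}. -/

import Mathlib

open MeasureTheory ProbabilityTheory Set Filter Function
open scoped Topology ENNReal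

noncomputable section

lemma my_leftLim_le {F : ℝ → ℝ} (hF : Monotone F) {Q c : ℝ}
    (h : ∀ y < Q, F y ≤ c) : Function.leftLim F Q ≤ c :=
  le_of_tendsto (hF.tendsto_leftLim Q)
    (eventually_nhdsWithin_of_forall fun y hy => h y hy)

lemma my_cdfLike {Ω : Type*} [MeasurableSpace Ω] (P : Measure Ω) [IsProbabilityMeasure P]
    (Z : Ω → ℝ) (hZ : Measurable Z) (A : Set Ω) (hA : MeasurableSet A)
    (p : ℝ) (hp : (P A).toReal = p) (hppos : 0 < p)
    (G : ℝ → ℝ) (hG : ∀ y, G y = (P ({ω | Z ω ≤ y} ∩ A)).toReal / p)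
    (τ : ℝ) (hτ0 : 0 < τ) (hτ1 : τ < 1) :
    Monotone G ∧ τ ≤ G (sInf {y | τ ≤ G y}) ∧ ∀ y < sInf {y | τ ≤ G y}, G y ≤ τ := by
  have hmeas : ∀ y : ℝ, MeasurableSet ({ω | Z ω ≤ y} ∩ A) := fun y =>
    (hZ measurableSet_Iic).inter hA
  have hmono : Monotone G := by
    intro a b hab
    rw [hG a, hG b]
    have hle : P ({ω | Z ω ≤ a} ∩ A) ≤ P ({ω | Z ω ≤ b} ∩ A) :=
      measure_mono (inter_subset_inter_left A fun ω (hω : Z ω ≤ a) => hω.trans hab)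
    exact (div_le_div_iff_of_pos_right hppos).mpr (ENNReal.toReal_mono (measure_ne_top P _) hle)
  -- sequential continuity from above
  have htends : ∀ (b : ℝ) (u : ℕ → ℝ), Antitone u → Tendsto u atTop (𝓝 b) →
      (∀ n, b ≤ u n) → Tendsto (fun n => G (u n)) atTop (𝓝 (G b)) := by
    intro b u hanti hu hbu
    have hset : (⋂ n, ({ω | Z ω ≤ u n} ∩ A)) = {ω | Z ω ≤ b} ∩ A := by
      ext ω
      simp only [mem_iInter, mem_inter_iff, mem_setOf_eq]
      constructor
      · intro h
        refine ⟨ge_of_tendsto hu (Eventually.of_forall fun n => (h n).1), (h 0).2⟩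
      · intro h n
        exact ⟨h.1.trans (hbu n), h.2⟩
    have := tendsto_measure_iInter_atTop (μ := P)
      (s := fun n => {ω | Z ω ≤ u n} ∩ A)
      (fun n => (hmeas (u n)).nullMeasurableSet)
      (fun n m hnm => inter_subset_inter_left A fun ω (hω : Z ω ≤ u m) => hω.trans (hanti hnm))
      ⟨0, measure_ne_top P _⟩
    rw [hset] at this
    have h2 : Tendsto (fun n => (P ({ω | Z ω ≤ u n} ∩ A)).toReal) atTop
        (𝓝 ((P ({ω | Z ω ≤ b} ∩ A)).toReal)) :=
      (ENNReal.tendsto_toReal (measure_ne_top P _)).comp this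
    have h3 := h2.div_const p
    simpa only [hG] using h3
  -- S nonempty
  have hSne : {y | τ ≤ G y}.Nonempty := by
    have hUnion : (⋃ n : ℕ, ({ω | Z ω ≤ (n : ℝ)} ∩ A)) = A := by
      ext ω
      simp only [mem_iUnion, mem_inter_iff, mem_setOf_eq]
      constructor
      · rintro ⟨n, _, h⟩; exact h
      · intro h
        obtain ⟨n, hn⟩ := exists_nat_ge (Z ω)
        exact ⟨n, hn, h⟩
    have := tendsto_measure_iUnion_atTop (μ := P)
      (s := fun n : ℕ => {ω | Z ω ≤ (n : ℝ)} ∩ A)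
      (fun n m hnm => inter_subset_inter_left A fun ω (hω : Z ω ≤ n) =>
        hω.trans (Nat.cast_le.mpr hnm))
    rw [hUnion] at this
    have h2 : Tendsto (fun n : ℕ => G n) atTop (𝓝 1) := by
      have h3 : Tendsto (fun n : ℕ => (P ({ω | Z ω ≤ (n:ℝ)} ∩ A)).toReal / p) atTop
          (𝓝 ((P A).toReal / p)) :=
        ((ENNReal.tendsto_toReal (measure_ne_top P _)).comp this).div_const p
      rw [hp, div_self hppos.ne'] at h3
      simpa only [hG] using h3
    obtain ⟨n, hn⟩ := (h2.eventually (eventually_ge_nhds hτ1)).exists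
    exact ⟨n, hn⟩
  -- S bounded below
  have hBdd : BddBelow {y | τ ≤ G y} := by
    have hInter : (⋂ n : ℕ, ({ω | Z ω ≤ -(n : ℝ)} ∩ A)) = ∅ := by
      ext ω
      simp only [mem_iInter, mem_inter_iff, mem_setOf_eq, mem_empty_iff_false, iff_false]
      intro h
      obtain ⟨n, hn⟩ := exists_nat_gt (-(Z ω))
      exact absurd (h n).1 (by linarith)
    have := tendsto_measure_iInter_atTop (μ := P)
      (s := fun n : ℕ => {ω | Z ω ≤ -(n : ℝ)} ∩ A)
      (fun n => (hmeas _).nullMeasurableSet)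
      (fun n m hnm => inter_subset_inter_left A fun ω (hω : Z ω ≤ -(m:ℝ)) =>
        hω.trans (by exact_mod_cast neg_le_neg (Nat.cast_le.mpr hnm)))
      ⟨0, measure_ne_top P _⟩
    rw [hInter, measure_empty] at this
    have h2 : Tendsto (fun n : ℕ => G (-(n:ℝ))) atTop (𝓝 0) := by
      have h3 : Tendsto (fun n : ℕ => (P ({ω | Z ω ≤ -(n:ℝ)} ∩ A)).toReal / p) atTop
          (𝓝 ((0:ℝ≥0∞).toReal / p)) :=
        ((ENNReal.tendsto_toReal (by simp)).comp this).div_const p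
      simp only [ENNReal.toReal_zero, zero_div] at h3
      simpa only [hG] using h3
    obtain ⟨n, hn⟩ := (h2.eventually (eventually_lt_nhds hτ0)).exists
    refine ⟨-(n:ℝ), fun y hy => ?_⟩
    by_contra hc
    push_neg at hc
    exact absurd (le_trans hy (hmono hc.le)) (not_le.mpr hn)
  set Q := sInf {y | τ ≤ G y} with hQ
  refine ⟨hmono, ?_, ?_⟩
  · -- τ ≤ G Q
    have hτn : ∀ n : ℕ, τ ≤ G (Q + 1 / (n + 1)) := by
      intro n
      have h1 : Q < Q + 1 / ((n:ℝ) + 1) := lt_add_of_pos_right _ (by positivity)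
      obtain ⟨y, hyS, hy⟩ := exists_lt_of_csInf_lt hSne h1
      exact le_trans hyS (hmono hy.le)
    have hu : Tendsto (fun n : ℕ => Q + 1 / ((n:ℝ) + 1)) atTop (𝓝 Q) := by
      have := tendsto_one_div_add_atTop_nhds_zero_nat (𝕜 := ℝ)
      simpa using (tendsto_const_nhds (x := Q)).add this
    have hanti : Antitone (fun n : ℕ => Q + 1 / ((n:ℝ) + 1)) := by
      intro n m hnm
      have : (1:ℝ) / (m + 1) ≤ 1 / (n + 1) := by
        apply one_div_le_one_div_of_le (by positivity)
        exact_mod_cast add_le_add_left (Nat.cast_le.mpr hnm) 1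
      linarith
    have := htends Q _ hanti hu (fun n => le_add_of_nonneg_right (by positivity))
    exact ge_of_tendsto this (Eventually.of_forall hτn)
  · intro y hy
    by_contra hc
    push_neg at hc
    exact absurd (csInf_le hBdd (le_of_lt hc : τ ≤ G y)) (not_le.mpr hy)

set_option maxHeartbeats 1000000 in
/-- **Threshold inequalities for the cdf bounds.**
Under overlap and `0 < c̲ < p₁ < c̄ < 1`:
`max{F̄₁(Q̄₁−), F̲₀(Q̲₀−)} ≤ (c̄−p₁)/(c̄−c̲) ≤ min{F̄₁(Q̄₁), F̲₀(Q̲₀)}` and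
`max{F̄₀(Q̄₀−), F̲₁(Q̲₁−)} ≤ (p₁−c̲)/(c̄−c̲) ≤ min{F̄₀(Q̄₀), F̲₁(Q̲₁)}`. -/
theorem threshold_inequalities_cdf_bounds
    {Ω : Type*} [MeasurableSpace Ω] (P : Measure Ω) [IsProbabilityMeasure P]
    (Y1 Y0 : Ω → ℝ) (X : Ω → Bool)
    (hY1 : Measurable Y1) (hY0 : Measurable Y0) (hX : Measurable X)
    (Y : Ω → ℝ) (hY : ∀ ω, Y ω = if X ω then Y1 ω else Y0 ω)
    (p1 p0 : ℝ) (hp1 : p1 = (P {ω | X ω = true}).toReal) (hp0 : p0 = 1 - p1)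
    (hov : 0 < p1 ∧ p1 < 1)
    (cl cu : ℝ) (hcl : 0 < cl) (hclp1 : cl < p1) (hp1cu : p1 < cu) (hcu : cu < 1)
    (G1 G0 : ℝ → ℝ)
    (hG1 : ∀ y, G1 y = (P {ω | Y ω ≤ y ∧ X ω = true}).toReal / p1)
    (hG0 : ∀ y, G0 y = (P {ω | Y ω ≤ y ∧ X ω = false}).toReal / p0)
    (Fu1 Fl1 Fu0 Fl0 : ℝ → ℝ)
    (hFu1 : ∀ y, Fu1 y = min (G1 y * p1 / cl) ((cu - p1) / cu + G1 y * p1 / cu))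
    (hFl1 : ∀ y, Fl1 y = max (G1 y * p1 / cu) ((cl - p1) / cl + G1 y * p1 / cl))
    (hFu0 : ∀ y, Fu0 y = min (G0 y * p0 / (1 - cu)) ((p1 - cl) / (1 - cl) + G0 y * p0 / (1 - cl)))
    (hFl0 : ∀ y, Fl0 y = max (G0 y * p0 / (1 - cl)) ((p1 - cu) / (1 - cu) + G0 y * p0 / (1 - cu)))
    (τl1 τu1 τl0 τu0 Ql1 Qu1 Ql0 Qu0 : ℝ)
    (hτl1 : τl1 = (p1 - cl) * cu / (p1 * (cu - cl))) (hτu1 : τu1 = 1 - τl1)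
    (hQl1 : Ql1 = sInf {y : ℝ | τl1 ≤ G1 y}) (hQu1 : Qu1 = sInf {y : ℝ | τu1 ≤ G1 y})
    (hτl0 : τl0 = (cu - p1) * (1 - cl) / (p0 * (cu - cl))) (hτu0 : τu0 = 1 - τl0)
    (hQl0 : Ql0 = sInf {y : ℝ | τl0 ≤ G0 y}) (hQu0 : Qu0 = sInf {y : ℝ | τu0 ≤ G0 y}) :
    (max (Function.leftLim Fu1 Qu1) (Function.leftLim Fl0 Ql0) ≤ (cu - p1) / (cu - cl) ∧
      (cu - p1) / (cu - cl) ≤ min (Fu1 Qu1) (Fl0 Ql0)) ∧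
    (max (Function.leftLim Fu0 Qu0) (Function.leftLim Fl1 Ql1) ≤ (p1 - cl) / (cu - cl) ∧
      (p1 - cl) / (cu - cl) ≤ min (Fu0 Qu0) (Fl1 Ql1)) := by
  obtain ⟨hp1pos, hp1lt⟩ := hov
  have hp0pos : 0 < p0 := by rw [hp0]; linarith
  have hcucl : 0 < cu - cl := by linarith
  have hcu1 : 0 < 1 - cu := by linarith
  have hcl1 : 0 < 1 - cl := by linarith
  -- measurability of Y
  have hYm : Measurable Y := by
    have : Y = fun ω => if X ω = true then Y1 ω else Y0 ω := funext fun ω => hY ω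
    rw [this]
    exact Measurable.ite (hX (MeasurableSet.singleton true)) hY1 hY0
  have hA1 : MeasurableSet {ω | X ω = true} := hX (MeasurableSet.singleton true)
  have hA0 : MeasurableSet {ω | X ω = false} := hX (MeasurableSet.singleton false)
  have hpA1 : (P {ω | X ω = true}).toReal = p1 := hp1.symm
  have hpA0 : (P {ω | X ω = false}).toReal = p0 := by
    have hcompl : {ω | X ω = false} = {ω | X ω = true}ᶜ := by
      ext ω; simp
    rw [hcompl, measure_compl hA1 (measure_ne_top P _), measure_univ,
      ENNReal.toReal_sub_of_le prob_le_one (by simp), ENNReal.toReal_one, hpA1, hp0]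
  -- threshold positivity facts
  have hτl1pos : 0 < τl1 := by
    rw [hτl1]
    exact div_pos (mul_pos (by linarith) (by linarith)) (mul_pos hp1pos hcucl)
  have hτl1lt : τl1 < 1 := by
    rw [hτl1, div_lt_one (mul_pos hp1pos hcucl)]
    nlinarith
  have hτu1pos : 0 < τu1 := by rw [hτu1]; linarith
  have hτu1lt : τu1 < 1 := by rw [hτu1]; linarith
  have hτl0pos : 0 < τl0 := by
    rw [hτl0]
    exact div_pos (mul_pos (by linarith) (by linarith)) (mul_pos hp0pos hcucl)
  have hτl0lt : τl0 < 1 := by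
    rw [hτl0, div_lt_one (mul_pos hp0pos hcucl), hp0]
    nlinarith
  have hτu0pos : 0 < τu0 := by rw [hτu0]; linarith
  have hτu0lt : τu0 < 1 := by rw [hτu0]; linarith
  -- apply cdf-like lemma
  have hG1' : ∀ y, G1 y = (P ({ω | Y ω ≤ y} ∩ {ω | X ω = true})).toReal / p1 := fun y => hG1 y
  have hG0' : ∀ y, G0 y = (P ({ω | Y ω ≤ y} ∩ {ω | X ω = false})).toReal / p0 := fun y => hG0 y
  obtain ⟨hG1mono, hQu1ge, hQu1lt⟩ :=
    my_cdfLike P Y hYm _ hA1 p1 hpA1 hp1pos G1 hG1' τu1 hτu1pos hτu1lt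
  obtain ⟨_, hQl1ge, hQl1lt⟩ :=
    my_cdfLike P Y hYm _ hA1 p1 hpA1 hp1pos G1 hG1' τl1 hτl1pos hτl1lt
  obtain ⟨hG0mono, hQu0ge, hQu0lt⟩ :=
    my_cdfLike P Y hYm _ hA0 p0 hpA0 hp0pos G0 hG0' τu0 hτu0pos hτu0lt
  obtain ⟨_, hQl0ge, hQl0lt⟩ :=
    my_cdfLike P Y hYm _ hA0 p0 hpA0 hp0pos G0 hG0' τl0 hτl0pos hτl0lt
  rw [← hQu1] at hQu1ge hQu1lt
  rw [← hQl1] at hQl1ge hQl1lt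
  rw [← hQu0] at hQu0ge hQu0lt
  rw [← hQl0] at hQl0ge hQl0lt
  -- key algebraic identities
  have hcl' : cl ≠ 0 := ne_of_gt hcl
  have hcu' : cu ≠ 0 := ne_of_gt (by linarith)
  have hp1' : p1 ≠ 0 := ne_of_gt hp1pos
  have hp0' : p0 ≠ 0 := ne_of_gt hp0pos
  have hcucl' : cu - cl ≠ 0 := ne_of_gt hcucl
  have hcu1' : 1 - cu ≠ 0 := ne_of_gt hcu1
  have hcl1' : 1 - cl ≠ 0 := ne_of_gt hcl1
  have hcupos : (0:ℝ) < cu := by linarith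
  have hcunn : (0:ℝ) ≤ cu := by linarith
  have hτu1' : τu1 = cl * (cu - p1) / (p1 * (cu - cl)) := by
    rw [hτu1, hτl1, one_sub_div (by exact mul_ne_zero hp1' hcucl')]
    congr 1; ring
  have hτu0' : τu0 = (1 - cu) * (p1 - cl) / (p0 * (cu - cl)) := by
    rw [hτu0, hτl0, one_sub_div (by exact mul_ne_zero hp0' hcucl'), hp0]
    congr 1
    ring
  have e1a : (cu - p1) / (cu - cl) = τu1 * p1 / cl := by
    rw [hτu1']; field_simp
  have e1b : (cu - p1) / (cu - cl) = (cu - p1) / cu + τu1 * p1 / cu := by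
    rw [hτu1']; field_simp; ring
  have e2a : (p1 - cl) / (cu - cl) = τl1 * p1 / cu := by
    rw [hτl1]; field_simp
  have e2b : (p1 - cl) / (cu - cl) = (cl - p1) / cl + τl1 * p1 / cl := by
    rw [hτl1]; field_simp; ring
  have e3a : (cu - p1) / (cu - cl) = τl0 * p0 / (1 - cl) := by
    rw [hτl0]; field_simp
  have e3b : (cu - p1) / (cu - cl) = (p1 - cu) / (1 - cu) + τl0 * p0 / (1 - cu) := by
    rw [hτl0]; field_simp; ring
  have e4a : (p1 - cl) / (cu - cl) = τu0 * p0 / (1 - cu) := by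
    rw [hτu0']; field_simp
  have e4b : (p1 - cl) / (cu - cl) = (p1 - cl) / (1 - cl) + τu0 * p0 / (1 - cl) := by
    rw [hτu0']; field_simp; ring
  have hp1nn : (0:ℝ) ≤ p1 := hp1pos.le
  have hp0nn : (0:ℝ) ≤ p0 := hp0pos.le
  -- monotonicity of F's
  have hFu1mono : Monotone Fu1 := by
    intro a b hab; rw [hFu1, hFu1]
    have h := hG1mono hab
    gcongr
  have hFl1mono : Monotone Fl1 := by
    intro a b hab; rw [hFl1, hFl1]
    have h := hG1mono hab
    gcongr
  have hFu0mono : Monotone Fu0 := by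
    intro a b hab; rw [hFu0, hFu0]
    have h := hG0mono hab
    gcongr
  have hFl0mono : Monotone Fl0 := by
    intro a b hab; rw [hFl0, hFl0]
    have h := hG0mono hab
    gcongr
  refine ⟨⟨max_le ?_ ?_, le_min ?_ ?_⟩, ⟨max_le ?_ ?_, le_min ?_ ?_⟩⟩
  · -- leftLim Fu1 Qu1 ≤ c1
    apply my_leftLim_le hFu1mono
    intro y hy
    have hGy := hQu1lt y hy
    rw [hFu1]
    refine le_trans (min_le_left _ _) ?_
    rw [e1a]; gcongr
  · -- leftLim Fl0 Ql0 ≤ c1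
    apply my_leftLim_le hFl0mono
    intro y hy
    have hGy := hQl0lt y hy
    rw [hFl0]
    apply max_le
    · rw [e3a]; gcongr
    · rw [e3b]; gcongr
  · -- c1 ≤ Fu1 Qu1
    rw [hFu1]
    apply le_min
    · rw [e1a]; gcongr
    · rw [e1b]; gcongr
  · -- c1 ≤ Fl0 Ql0
    rw [hFl0]
    refine le_trans ?_ (le_max_left _ _)
    rw [e3a]; gcongr
  · -- leftLim Fu0 Qu0 ≤ c2
    apply my_leftLim_le hFu0mono
    intro y hy
    have hGy := hQu0lt y hy
    rw [hFu0]
    refine le_trans (min_le_left _ _) ?_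
    rw [e4a]; gcongr
  · -- leftLim Fl1 Ql1 ≤ c2
    apply my_leftLim_le hFl1mono
    intro y hy
    have hGy := hQl1lt y hy
    rw [hFl1]
    apply max_le
    · rw [e2a]; gcongr
    · rw [e2b]; gcongr
  · -- c2 ≤ Fu0 Qu0
    rw [hFu0]
    apply le_min
    · rw [e4a]; gcongr
    · rw [e4b]; gcongr
  · -- c2 ≤ Fl1 Ql1
    rw [hFl1]
    refine le_trans ?_ (le_max_left _ _)
    rw [e2a]; gcongr
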